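/- Let F : C → D be a full and essentially surjective k-linear functor between essentially small k-linear tensor categories with F a tensor functor and C rigid. Then every k-linear functor M : C → Mod_k admits at most one structure of module over the monoid A = F*(𝟙_{Rep D}) in the Day convolution tensor category Fun_k(C, Mod_k). -/

import Mathlib

/-!
Statement 10: Let `F : C ⥤ D` be a full and essentially surjective `k`-linear tensor
functor between essentially small `k`-linear tensor categories, with `C` rigid.  Then every
`k`-linear functor `M : C ⥤ Mod_k` admits at most one structure of module over the
commutative monoid `A = F*(𝟙_{Rep D}) = D(𝟙, F−)` in the Day convolution tensor category
`Fun_k(C, Mod_k)`.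

Pointwise, `(A ⊗_C M)(c) = ∫^{(u,v) ∈ C×C} C(u ⊗ v, c) ⊗ D(𝟙, Fu) ⊗ M(v)` (a `k`-linear
coend, computed as a quotient of a direct sum via the unbundled `CoendData` below).  An
`A`-module structure on `M` is a natural `k`-linear map `ρ : A ⊗_C M ⟶ M` satisfying the
unit and associativity axioms; these are expressed below on generators of the coends.
-/

open CategoryTheory TensorProduct DirectSum MonoidalCategory

universe u

variable (k : Type u) [CommRing k]

/-- Unbundled data for a `k`-linear coend `∫^{c ∈ E} H(c,c)`. -/
structure CoendData (E : Type u) [Category.{u} E] : Type (u + 1) where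
  obj : E → E → ModuleCat.{u} k
  left : ∀ {c c' : E} (d : E), (c' ⟶ c) → (obj c d →ₗ[k] obj c' d)
  right : ∀ (c : E) {d d' : E}, (d ⟶ d') → (obj c d →ₗ[k] obj c d')

variable {k} {E : Type u} [Category.{u} E]

/-- The submodule of relations defining the coend. -/
noncomputable def CoendData.relations (H : CoendData k E) :
    Submodule k (⨁ c : E, (H.obj c c : Type u)) :=
  letI := Classical.decEq E
  Submodule.span k {z | ∃ (c c' : E) (α : c' ⟶ c) (y : H.obj c c'),
    z = DirectSum.lof k E (fun c => (H.obj c c : Type u)) c' (H.left c' α y)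
      - DirectSum.lof k E (fun c => (H.obj c c : Type u)) c (H.right c α y)}

/-- The `k`-linear coend `∫^{c} H(c,c)`. -/
noncomputable def CoendData.Coend (H : CoendData k E) : Type u :=
  (⨁ c : E, (H.obj c c : Type u)) ⧸ H.relations

noncomputable instance (H : CoendData k E) : AddCommGroup H.Coend :=
  inferInstanceAs (AddCommGroup ((⨁ c : E, (H.obj c c : Type u)) ⧸ H.relations))

noncomputable instance (H : CoendData k E) : Module k H.Coend :=
  inferInstanceAs (Module k ((⨁ c : E, (H.obj c c : Type u)) ⧸ H.relations))

/-- The generator `[x]_c` of the coend. -/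
noncomputable def CoendData.gen (H : CoendData k E) (c : E) (x : H.obj c c) : H.Coend :=
  letI := Classical.decEq E
  Submodule.Quotient.mk (DirectSum.lof k E (fun c => (H.obj c c : Type u)) c x)



/-- The fundamental coend relation on generators. -/
theorem CoendData.gen_left_eq_right (H : CoendData k E) {c c' : E}
    (α : c' ⟶ c) (y : H.obj c c') :
    H.gen c' (H.left c' α y) = H.gen c (H.right c α y) := by
  letI := Classical.decEq E
  unfold CoendData.gen
  show (Submodule.Quotient.mk _ : (⨁ c : E, (H.obj c c : Type u)) ⧸ H.relations) = _
  rw [Submodule.Quotient.eq]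
  exact Submodule.subset_span ⟨c, c', α, y, rfl⟩

theorem CoendData.gen_zero' (H : CoendData k E) (c : E) : H.gen c 0 = 0 := by
  letI := Classical.decEq E
  exact map_zero (H.relations.mkQ.comp (DirectSum.lof k E (fun c => (H.obj c c : Type u)) c))

theorem CoendData.gen_add' (H : CoendData k E) (c : E) (x y : H.obj c c) :
    H.gen c (x + y) = H.gen c x + H.gen c y := by
  letI := Classical.decEq E
  exact map_add (H.relations.mkQ.comp (DirectSum.lof k E (fun c => (H.obj c c : Type u)) c)) x y


section Unique

variable (k)
variable {C D : Type u} [Category.{u} C] [Category.{u} D]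
  [Preadditive C] [Linear k C] [MonoidalCategory C] [SymmetricCategory C]
  [MonoidalPreadditive C] [MonoidalLinear k C] [RigidCategory C]
  [Preadditive D] [Linear k D] [MonoidalCategory D] [SymmetricCategory D]
  [MonoidalPreadditive D] [MonoidalLinear k D]
  (F : C ⥤ D) [F.Additive] [F.Linear k] [F.Monoidal]

/-- Coend data computing `(A ⊗_C M)(c) = ∫^{(u,v)} C(u ⊗ v, c) ⊗ D(𝟙, Fu) ⊗ M(v)`,
where `A = F*(𝟙_{Rep D}) = D(𝟙, F−)`. -/
noncomputable def AMData (M : C ⥤ ModuleCat.{u} k) (c : C) : CoendData k (C × C) where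
  obj p q := ModuleCat.of k
    (((p.1 ⊗ p.2 : C) ⟶ c) ⊗[k]
      (((𝟙_ D ⟶ F.obj q.1) : Type u) ⊗[k] (M.obj q.2 : Type u)))
  left q φ := TensorProduct.map (Linear.leftComp k c (φ.1 ⊗ₘ φ.2)) LinearMap.id
  right p {q q'} ψ := TensorProduct.map LinearMap.id
    (TensorProduct.map (Linear.rightComp k (𝟙_ D) (F.map ψ.1)) (M.map ψ.2).hom)

/-- The generator `[g, a, m]_{(u,v)}` of `(A ⊗_C M)(c)`. -/
noncomputable def amGen (M : C ⥤ ModuleCat.{u} k) {c : C} (u v : C)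
    (g : (u ⊗ v : C) ⟶ c) (a : 𝟙_ D ⟶ F.obj u) (m : M.obj v) :
    (AMData k F M c).Coend :=
  (AMData k F M c).gen (u, v)
    (show (((u ⊗ v : C) ⟶ c) ⊗[k]
        (((𝟙_ D ⟶ F.obj u) : Type u) ⊗[k] (M.obj v : Type u))) from
      g ⊗ₜ (a ⊗ₜ m))

/-- `ρ` is an `A`-module structure on `M`: a natural family of `k`-linear maps
`ρ_c : (A ⊗_C M)(c) ⟶ M(c)` which is unital and associative (expressed on generators). -/
def IsAModuleStructure (M : C ⥤ ModuleCat.{u} k)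
    (ρ : ∀ c : C, (AMData k F M c).Coend →ₗ[k] M.obj c) : Prop :=
  -- naturality in `c`
  (∀ (c c' : C) (f : c ⟶ c') (u v : C) (g : (u ⊗ v : C) ⟶ c)
      (a : 𝟙_ D ⟶ F.obj u) (m : M.obj v),
    ρ c' (amGen k F M u v (g ≫ f) a m) = M.map f (ρ c (amGen k F M u v g a m))) ∧
  -- unit axiom (the unit of `A` is induced by the unit `ε : 𝟙_D ⟶ F(𝟙_C)` of `F`)
  (∀ (c : C) (m : M.obj c),
    ρ c (amGen k F M (𝟙_ C) c (λ_ c).hom (Functor.LaxMonoidal.ε F) m) = m) ∧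
  -- associativity axiom (the multiplication of `A` is induced by the lax structure of
  -- `F*`, i.e. by `a · a' = (λ_𝟙)⁻¹ ≫ (a ⊗ₘ a') ≫ μ_{u,u'}`)
  (∀ (u u' v' c : C) (g : (u ⊗ (u' ⊗ v') : C) ⟶ c)
      (a : 𝟙_ D ⟶ F.obj u) (a' : 𝟙_ D ⟶ F.obj u') (m : M.obj v'),
    ρ c (amGen k F M u (u' ⊗ v') g a
        (ρ (u' ⊗ v') (amGen k F M u' v' (𝟙 (u' ⊗ v')) a' m))) =
      ρ c (amGen k F M (u ⊗ u') v' ((α_ u u' v').hom ≫ g)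
        ((λ_ (𝟙_ D)).inv ≫ (a ⊗ₘ a') ≫ Functor.LaxMonoidal.μ F u u') m))

theorem amGen_rel (M : C ⥤ ModuleCat.{u} k) {c : C} (u v : C)
    (g : (u ⊗ v : C) ⟶ c) (a : 𝟙_ D ⟶ F.obj u) (m : M.obj v)
    (abar : 𝟙_ C ⟶ u) (ha : a = Functor.LaxMonoidal.ε F ≫ F.map abar) :
    amGen k F M u v g a m
      = amGen k F M (𝟙_ C) v ((abar ⊗ₘ 𝟙 v) ≫ g) (Functor.LaxMonoidal.ε F) m := by
  have h := CoendData.gen_left_eq_right (AMData k F M c)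
    (c := (u, v)) (c' := ((𝟙_ C : C), v)) (α := (abar, 𝟙 v))
    (y := (g ⊗ₜ ((Functor.LaxMonoidal.ε F : 𝟙_ D ⟶ F.obj (𝟙_ C)) ⊗ₜ m) :
      (((u ⊗ v : C) ⟶ c) ⊗[k]
        (((𝟙_ D ⟶ F.obj (𝟙_ C)) : Type u) ⊗[k] (M.obj v : Type u)))))
  have hl : (AMData k F M c).left ((𝟙_ C : C), v)
        ((abar, 𝟙 v) : (((𝟙_ C : C), v) : C × C) ⟶ (u, v))
        (g ⊗ₜ ((Functor.LaxMonoidal.ε F : 𝟙_ D ⟶ F.obj (𝟙_ C)) ⊗ₜ m))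
      = ((abar ⊗ₘ 𝟙 v) ≫ g) ⊗ₜ (Functor.LaxMonoidal.ε F ⊗ₜ m) := by
    show TensorProduct.map _ _ _ = _
    rw [TensorProduct.map_tmul]
    simp [Linear.leftComp_apply]
  have hr : (AMData k F M c).right (u, v)
        ((abar, 𝟙 v) : (((𝟙_ C : C), v) : C × C) ⟶ (u, v))
        (g ⊗ₜ ((Functor.LaxMonoidal.ε F : 𝟙_ D ⟶ F.obj (𝟙_ C)) ⊗ₜ m))
      = g ⊗ₜ ((Functor.LaxMonoidal.ε F ≫ F.map abar) ⊗ₜ m) := by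
    show TensorProduct.map _ _ _ = _
    rw [TensorProduct.map_tmul, TensorProduct.map_tmul]
    rw [M.map_id]
    rfl
  rw [hl, hr] at h
  unfold amGen
  rw [ha]
  exact h.symm

/-- `ρ` is determined on generators. -/
theorem rho_eval (hFull : F.Full) (M : C ⥤ ModuleCat.{u} k)
    (ρ : ∀ c : C, (AMData k F M c).Coend →ₗ[k] M.obj c)
    (hρ : IsAModuleStructure k F M ρ) {c : C} (u v : C)
    (g : (u ⊗ v : C) ⟶ c) (a : 𝟙_ D ⟶ F.obj u) (m : M.obj v) :
    ρ c (amGen k F M u v g a m) =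
      M.map ((λ_ v).inv ≫
        ((F.preimage (inv (Functor.LaxMonoidal.ε F) ≫ a)) ⊗ₘ 𝟙 v) ≫ g) m := by
  letI := hFull
  obtain ⟨hnat, hunit, -⟩ := hρ
  set abar : 𝟙_ C ⟶ u := F.preimage (inv (Functor.LaxMonoidal.ε F) ≫ a) with habar
  have ha : a = Functor.LaxMonoidal.ε F ≫ F.map abar := by
    rw [habar, F.map_preimage, IsIso.hom_inv_id_assoc]
  rw [amGen_rel k F M u v g a m abar ha]
  have hg : (abar ⊗ₘ 𝟙 v) ≫ g = (λ_ v).hom ≫ ((λ_ v).inv ≫ (abar ⊗ₘ 𝟙 v) ≫ g) := by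
    simp
  rw [hg, hnat v c ((λ_ v).inv ≫ (abar ⊗ₘ 𝟙 v) ≫ g) (𝟙_ C) v (λ_ v).hom
    (Functor.LaxMonoidal.ε F) m, hunit v m]
  congr 1
  simp


/-- **Uniqueness of `A`-module structures.**  If `F` is full and essentially surjective,
every `k`-linear functor `M : C ⥤ Mod_k` admits at most one `A`-module structure. -/
theorem amodule_structure_unique (hFull : F.Full) (hEssSurj : F.EssSurj)
    (M : C ⥤ ModuleCat.{u} k) [M.Additive] [M.Linear k]
    (ρ ρ' : ∀ c : C, (AMData k F M c).Coend →ₗ[k] M.obj c)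
    (hρ : IsAModuleStructure k F M ρ) (hρ' : IsAModuleStructure k F M ρ') :
    ρ = ρ' := by
  funext c
  apply LinearMap.ext
  intro x
  obtain ⟨y, rfl⟩ := Submodule.Quotient.mk_surjective _ x
  have key : ∀ y : ⨁ p : C × C, ((AMData k F M c).obj p p : Type u),
      ρ c (Submodule.Quotient.mk y) = ρ' c (Submodule.Quotient.mk y) := by
    intro y
    letI := Classical.decEq (C × C)
    induction y using DirectSum.induction_on with
    | zero =>
        show ρ c 0 = ρ' c 0
        rw [map_zero, map_zero]
    | add a b ha hb =>
        have e : (Submodule.Quotient.mk (a + b) : _ ⧸ (AMData k F M c).relations) =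
            Submodule.Quotient.mk a + Submodule.Quotient.mk b := Submodule.Quotient.mk_add _
        exact (congrArg (ρ c) e).trans ((map_add _ _ _).trans ((congrArg₂ (· + ·) ha hb).trans ((map_add _ _ _).symm.trans (congrArg (ρ' c) e).symm)))
    | of p x =>
        letI := Classical.decEq (C × C)
        have hx : ∀ x : ((AMData k F M c).obj p p : Type u),
            ρ c ((AMData k F M c).gen p x) = ρ' c ((AMData k F M c).gen p x) := by
          intro x
          induction x using TensorProduct.induction_on with
          | zero =>
              show ρ c ((AMData k F M c).gen p 0) = ρ' c ((AMData k F M c).gen p 0)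
              rw [CoendData.gen_zero', map_zero, map_zero]
          | add a b ha hb =>
              have e := CoendData.gen_add' (AMData k F M c) p a b
              exact (congrArg (ρ c) e).trans ((map_add _ _ _).trans ((congrArg₂ (· + ·) ha hb).trans ((map_add _ _ _).symm.trans (congrArg (ρ' c) e).symm)))
          | tmul g w =>
              induction w using TensorProduct.induction_on with
              | zero =>
                  show ρ c ((AMData k F M c).gen p (g ⊗ₜ 0)) = ρ' c ((AMData k F M c).gen p (g ⊗ₜ 0))
                  rw [TensorProduct.tmul_zero]
                  exact (congrArg (ρ c) (CoendData.gen_zero' _ p)).trans ((map_zero _).trans ((map_zero _).symm.trans (congrArg (ρ' c) (CoendData.gen_zero' _ p)).symm))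
              | add a b ha hb =>
                  have e := CoendData.gen_add' (AMData k F M c) p (g ⊗ₜ a) (g ⊗ₜ b)
                  rw [TensorProduct.tmul_add]
                  exact (congrArg (ρ c) e).trans ((map_add _ _ _).trans ((congrArg₂ (· + ·) ha hb).trans ((map_add _ _ _).symm.trans (congrArg (ρ' c) e).symm)))
              | tmul a m =>
                  show ρ c (amGen k F M p.1 p.2 g a m) = ρ' c (amGen k F M p.1 p.2 g a m)
                  rw [rho_eval k F hFull M ρ hρ, rho_eval k F hFull M ρ' hρ']
        exact hx x
  exact key y

end Unique
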